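/- Let n ≥ 3 and k ≥ 1 be integers, let x ∈ ℕ^{n×n} be a symmetric matrix with x_{ij} ≤ log n for all i, j ∈ [n], and let z ∈ {1,…,k}^n be such that for every a ∈ {1,…,k} one has n_a(z) ≥ 1 and d^t_a(x,z) ≥ max(n_a(z), 3). Then ∏_{a=1}^{k} [ Γ(1/2)^{n_a(z)} · Γ( d^t_a(x,z) + n_a(z)/2 ) / Γ( n_a(z)/2 ) · ∏_{i : z_i = a} ( ( d_i(x) / d^t_a(x,z) )^{d_i(x)} / Γ( d_i(x) + 1/2 ) ) ] ≤ ( n² · log n )^{n}. -/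

import Mathlib

set_option maxHeartbeats 1000000

open Finset

/-- `n_a(z)`: number of vertices in community `a`. -/
def nCount {n k : ℕ} (z : Fin n → Fin k) (a : Fin k) : ℕ :=
  (Finset.univ.filter fun i => z i = a).card

/-- `d_i(x)`: degree of node `i`. -/
def deg {n : ℕ} (x : Fin n → Fin n → ℕ) (i : Fin n) : ℕ := ∑ j, x i j

/-- `d^t_a(x,z)`: total degree of community `a`. -/
def degT {n k : ℕ} (x : Fin n → Fin n → ℕ) (z : Fin n → Fin k) (a : Fin k) : ℕ :=
  ∑ i ∈ Finset.univ.filter (fun i => z i = a), deg x i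

section RBHelpers
open Real Nat

private lemma RB.exp_one_le : Real.exp 1 ≤ 2.7182818286 := Real.exp_one_lt_d9.le

private lemma RB.exp_three_half_le : Real.exp (3/2) ≤ 4.49 := by
  have h : Real.exp (3/2) = Real.sqrt (Real.exp 3) := by
    rw [← Real.exp_half]
  have h3 : Real.exp 3 ≤ 20.1601 := by
    have h0 : Real.exp 3 = (Real.exp 1)^(3:ℕ) := by rw [← Real.exp_nat_mul]; norm_num
    rw [h0]
    calc (Real.exp 1)^(3:ℕ) ≤ 2.7182818286^(3:ℕ) :=
          pow_le_pow_left₀ (Real.exp_pos 1).le RB.exp_one_le 3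
    _ ≤ 20.1601 := by norm_num
  rw [h]
  calc Real.sqrt (Real.exp 3) ≤ Real.sqrt (20.1601) := Real.sqrt_le_sqrt h3
  _ = Real.sqrt (4.49^2) := by norm_num
  _ = 4.49 := Real.sqrt_sq (by norm_num)

private lemma RB.log_three_ge : (12/11 : ℝ) ≤ Real.log 3 := by
  rw [Real.le_log_iff_exp_le (by norm_num)]
  have h : (Real.exp (12/11))^(11:ℕ) = Real.exp 12 := by
    rw [← Real.exp_nat_mul]; norm_num
  have h2 : Real.exp 12 = (Real.exp 1)^(12:ℕ) := by rw [← Real.exp_nat_mul]; norm_num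
  have h3 : (Real.exp 1)^(12:ℕ) ≤ 2.7182818286^(12:ℕ) :=
    pow_le_pow_left₀ (Real.exp_pos 1).le RB.exp_one_le 12
  have h4 : (2.7182818286:ℝ)^(12:ℕ) ≤ 3^(11:ℕ) := by norm_num
  have h5 : (Real.exp (12/11))^(11:ℕ) ≤ 3^(11:ℕ) := by rw [h, h2]; linarith
  exact le_of_pow_le_pow_left₀ (by norm_num) (by norm_num) h5

private lemma RB.sqrt_le_self {x : ℝ} (hx : 1 ≤ x) : Real.sqrt x ≤ x := by
  nlinarith [Real.sq_sqrt (by linarith : (0:ℝ) ≤ x), Real.sqrt_nonneg x]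

private lemma RB.exp_nat_cast (k : ℕ) : Real.exp ((k:ℝ)) = (Real.exp 1)^k := by
  rw [← Real.exp_nat_mul]; norm_num

private lemma RB.stirling_ub {n : ℕ} (hn : 1 ≤ n) :
    (n ! : ℝ) ≤ Real.sqrt n * n ^ n * Real.exp (1 - n) := by
  obtain ⟨m, rfl⟩ := Nat.exists_eq_add_of_le hn
  have h1 : Stirling.stirlingSeq (1 + m) ≤ Stirling.stirlingSeq 1 := by
    have := Stirling.stirlingSeq'_antitone (Nat.zero_le m)
    simpa [Function.comp, Nat.add_comm] using this
  rw [Stirling.stirlingSeq_one] at h1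
  have hpos : (0:ℝ) < Real.sqrt (2 * ((1+m:ℕ):ℝ)) * (((1+m:ℕ):ℝ) / Real.exp 1) ^ (1+m) := by
    have : (0:ℝ) < ((1+m:ℕ):ℝ) := by positivity
    positivity
  have hdef : Stirling.stirlingSeq (1+m) =
      ((1+m)! : ℝ) / (Real.sqrt (2 * ((1+m:ℕ):ℝ)) * (((1+m:ℕ):ℝ) / Real.exp 1) ^ (1+m)) :=
    rfl
  rw [hdef, div_le_iff₀ hpos] at h1
  calc ((1+m)! :ℝ) ≤ Real.exp 1 / Real.sqrt 2 *
      (Real.sqrt (2 * ((1+m:ℕ):ℝ)) * (((1+m:ℕ):ℝ) / Real.exp 1) ^ (1+m)) := h1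
  _ = Real.sqrt ((1+m:ℕ)) * ((1+m:ℕ):ℝ)^(1+m) * Real.exp (1 - ((1+m:ℕ):ℝ)) := by
      rw [Real.sqrt_mul (by norm_num), Real.exp_sub, RB.exp_nat_cast, div_pow]
      have h2 : Real.sqrt 2 ≠ 0 := by positivity
      have h3 : (Real.exp 1)^(1+m) ≠ 0 := by positivity
      field_simp

private lemma RB.stirling_lb (n : ℕ) :
    Real.sqrt Real.pi * Real.sqrt (2*(n:ℝ)) * n ^ n * Real.exp (-(n:ℝ)) ≤ (n ! : ℝ) := by
  rcases Nat.eq_zero_or_pos n with rfl | hn0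
  · simp
  have hn : 1 ≤ n := hn0
  obtain ⟨m, rfl⟩ := Nat.exists_eq_add_of_le hn
  have h1 : Real.sqrt Real.pi ≤ Stirling.stirlingSeq (1 + m) := by
    have ha : Antitone (Stirling.stirlingSeq ∘ Nat.succ) := Stirling.stirlingSeq'_antitone
    have ht : Filter.Tendsto (Stirling.stirlingSeq ∘ Nat.succ) Filter.atTop
        (nhds (Real.sqrt Real.pi)) :=
      Stirling.tendsto_stirlingSeq_sqrt_pi.comp (Filter.tendsto_add_atTop_nat 1)
    have := ha.le_of_tendsto ht m
    simpa [Function.comp, Nat.add_comm] using this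
  have hpos : (0:ℝ) < Real.sqrt (2 * ((1+m:ℕ):ℝ)) * (((1+m:ℕ):ℝ) / Real.exp 1) ^ (1+m) := by
    have : (0:ℝ) < ((1+m:ℕ):ℝ) := by positivity
    positivity
  have hdef : Stirling.stirlingSeq (1+m) =
      ((1+m)! : ℝ) / (Real.sqrt (2 * ((1+m:ℕ):ℝ)) * (((1+m:ℕ):ℝ) / Real.exp 1) ^ (1+m)) :=
    rfl
  rw [hdef, le_div_iff₀ hpos] at h1
  refine le_trans (le_of_eq ?_) h1
  rw [Real.exp_neg, RB.exp_nat_cast, div_pow]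
  have h3 : (Real.exp 1)^(1+m) ≠ 0 := by positivity
  field_simp

private lemma RB.pow_le_exp_mul_factorial (n : ℕ) : ((n:ℝ))^n ≤ Real.exp n * (n ! : ℝ) := by
  have h1 : ((n:ℝ))^n / (n ! : ℝ) ≤ Real.exp n := by
    have h2 := Real.sum_le_exp_of_nonneg (x := (n:ℝ)) (by positivity) (n+1)
    refine le_trans ?_ h2
    have := Finset.single_le_sum (f := fun i => ((n:ℝ))^i / (i ! : ℝ))
      (fun i _ => by positivity) (Finset.self_mem_range_succ n)
    simpa using this
  have hf : (0:ℝ) < (n ! : ℝ) := by exact_mod_cast Nat.factorial_pos n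
  rw [div_le_iff₀ hf] at h1
  linarith

private lemma RB.gamma_sq_le {a b : ℝ} (ha : 0 < a) (hb : 0 < b) :
    Real.Gamma ((a+b)/2) ^ 2 ≤ Real.Gamma a * Real.Gamma b := by
  have hc := Real.convexOn_log_Gamma.2 (Set.mem_Ioi.mpr ha) (Set.mem_Ioi.mpr hb)
    (by norm_num : (0:ℝ) ≤ 1/2) (by norm_num : (0:ℝ) ≤ 1/2) (by norm_num)
  simp only [Function.comp, smul_eq_mul] at hc
  have hmid : (1/2 : ℝ) * a + (1/2 : ℝ) * b = (a+b)/2 := by ring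
  rw [hmid] at hc
  have hpa := Real.Gamma_pos_of_pos ha
  have hpb := Real.Gamma_pos_of_pos hb
  have hpm := Real.Gamma_pos_of_pos (by linarith : (0:ℝ) < (a+b)/2)
  have h2 : Real.log (Real.Gamma ((a+b)/2) ^ 2) ≤ Real.log (Real.Gamma a * Real.Gamma b) := by
    rw [Real.log_pow, Real.log_mul hpa.ne' hpb.ne']
    push_cast
    linarith
  exact (Real.log_le_log_iff (by positivity) (by positivity)).mp h2

private lemma RB.sqrt_from_sq {A B : ℝ} (hB : 0 ≤ B) (h : A^2 ≤ B^2) (hA : 0 ≤ A) : A ≤ B := by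
  nlinarith

private lemma RB.gamma_half_ub {x : ℝ} (hx : 0 < x) :
    Real.Gamma (x + 1/2) ≤ Real.Gamma x * Real.sqrt x := by
  have h := RB.gamma_sq_le hx (by linarith : (0:ℝ) < x + 1)
  have hmid : (x + (x+1))/2 = x + 1/2 := by ring
  rw [hmid, Real.Gamma_add_one hx.ne'] at h
  refine RB.sqrt_from_sq (by positivity) ?_ (Real.Gamma_pos_of_pos (by linarith)).le
  have hs : Real.sqrt x ^ 2 = x := Real.sq_sqrt hx.le
  nlinarith [Real.Gamma_pos_of_pos hx]

private lemma RB.gamma_half_lb {x : ℝ} (hx : 0 ≤ x) :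
    Real.Gamma (x + 1) ≤ Real.Gamma (x + 1/2) * Real.sqrt (x + 1/2) := by
  have h := RB.gamma_sq_le (a := x + 1/2) (b := x + 3/2) (by linarith) (by linarith)
  have hmid : ((x + 1/2) + (x + 3/2))/2 = x + 1 := by ring
  have h32 : (x + 3/2 : ℝ) = (x + 1/2) + 1 := by ring
  have hne : (x + 1/2 : ℝ) ≠ 0 := by positivity
  rw [hmid, h32, Real.Gamma_add_one hne] at h
  refine RB.sqrt_from_sq (by positivity) ?_ (Real.Gamma_pos_of_pos (by linarith)).le
  have hs : Real.sqrt (x + 1/2) ^ 2 = x + 1/2 := Real.sq_sqrt (by linarith)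
  nlinarith [Real.Gamma_pos_of_pos (by linarith : (0:ℝ) < x + 1/2)]

private lemma RB.vertex_bound (D : ℕ) :
    Real.sqrt Real.pi * ((D:ℝ))^D ≤ Real.exp D * Real.Gamma ((D:ℝ) + 1/2) := by
  rcases Nat.eq_zero_or_pos D with rfl | hD
  · simp only [Nat.cast_zero, pow_zero, mul_one, CharP.cast_eq_zero, Real.exp_zero, one_mul,
      zero_add]
    rw [Real.Gamma_one_half_eq]
  have hD1 : (1:ℝ) ≤ (D:ℝ) := by exact_mod_cast hD
  have hQ : (D ! : ℝ) ≤ Real.Gamma ((D:ℝ) + 1/2) * Real.sqrt ((D:ℝ) + 1/2) := by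
    have h := RB.gamma_half_lb (x := (D:ℝ)) (by positivity)
    rwa [Real.Gamma_nat_eq_factorial] at h
  have hS := RB.stirling_lb D
  have hcmp : Real.sqrt ((D:ℝ) + 1/2) ≤ Real.sqrt (2*(D:ℝ)) := by
    apply Real.sqrt_le_sqrt; linarith
  have hGpos : (0:ℝ) < Real.Gamma ((D:ℝ) + 1/2) := Real.Gamma_pos_of_pos (by positivity)
  have h1 : Real.sqrt Real.pi * Real.sqrt (2*(D:ℝ)) * (D:ℝ)^D * Real.exp (-(D:ℝ))
      ≤ Real.Gamma ((D:ℝ) + 1/2) * Real.sqrt (2*(D:ℝ)) := by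
    calc Real.sqrt Real.pi * Real.sqrt (2*(D:ℝ)) * (D:ℝ)^D * Real.exp (-(D:ℝ)) ≤ (D ! : ℝ) := hS
    _ ≤ Real.Gamma ((D:ℝ) + 1/2) * Real.sqrt ((D:ℝ) + 1/2) := hQ
    _ ≤ Real.Gamma ((D:ℝ) + 1/2) * Real.sqrt (2*(D:ℝ)) :=
        mul_le_mul_of_nonneg_left hcmp hGpos.le
  have hs2 : (0:ℝ) < Real.sqrt (2*(D:ℝ)) := by positivity
  have h2 : Real.sqrt Real.pi * (D:ℝ)^D * Real.exp (-(D:ℝ)) ≤ Real.Gamma ((D:ℝ) + 1/2) := by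
    have hmul := mul_le_mul_of_nonneg_right h1 (le_of_lt (inv_pos.mpr hs2))
    calc Real.sqrt Real.pi * (D:ℝ)^D * Real.exp (-(D:ℝ))
        = Real.sqrt Real.pi * Real.sqrt (2*(D:ℝ)) * (D:ℝ)^D * Real.exp (-(D:ℝ)) *
          (Real.sqrt (2*(D:ℝ)))⁻¹ := by
          field_simp
    _ ≤ Real.Gamma ((D:ℝ) + 1/2) * Real.sqrt (2*(D:ℝ)) * (Real.sqrt (2*(D:ℝ)))⁻¹ := hmul
    _ = Real.Gamma ((D:ℝ) + 1/2) := by field_simp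
  have hepos : (0:ℝ) < Real.exp (D:ℝ) := Real.exp_pos _
  have hm := mul_le_mul_of_nonneg_left h2 hepos.le
  calc Real.sqrt Real.pi * ((D:ℝ))^D
      = Real.exp (D:ℝ) * (Real.sqrt Real.pi * (D:ℝ)^D * Real.exp (-(D:ℝ))) := by
        rw [Real.exp_neg]; field_simp
  _ ≤ Real.exp (D:ℝ) * Real.Gamma ((D:ℝ) + 1/2) := hm

private lemma RB.gamma_nat_sqrt {s : ℕ} (hs : 1 ≤ s) :
    Real.Gamma (s:ℝ) * Real.sqrt (s:ℝ) ≤ ((s:ℝ))^s * Real.exp (1 - (s:ℝ)) := by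
  obtain ⟨t, rfl⟩ := Nat.exists_eq_add_of_le hs
  have hG : Real.Gamma ((1+t:ℕ):ℝ) = (t ! : ℝ) := by
    push_cast
    rw [add_comm (1:ℝ) (t:ℝ), Real.Gamma_nat_eq_factorial]
  have hfac : ((1+t)! : ℝ) = (1+t:ℕ) * (t ! :ℝ) := by
    rw [add_comm 1 t]
    push_cast [Nat.factorial_succ]
    ring_nf
  have hub := RB.stirling_ub (n := 1+t) (by omega)
  have hpos : (0:ℝ) < ((1+t:ℕ):ℝ) := by positivity
  have hsq : Real.sqrt ((1+t:ℕ):ℝ) * Real.sqrt ((1+t:ℕ):ℝ) = ((1+t:ℕ):ℝ) :=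
    Real.mul_self_sqrt hpos.le
  rw [hG]
  rw [← mul_le_mul_iff_of_pos_right hpos]
  calc (t ! : ℝ) * Real.sqrt ((1+t:ℕ):ℝ) * ((1+t:ℕ):ℝ)
      = ((1+t)! : ℝ) * Real.sqrt ((1+t:ℕ):ℝ) := by rw [hfac]; ring
  _ ≤ (Real.sqrt ((1+t:ℕ):ℝ) * ((1+t:ℕ):ℝ)^(1+t) * Real.exp (1 - ((1+t:ℕ):ℝ))) *
      Real.sqrt ((1+t:ℕ):ℝ) :=
      mul_le_mul_of_nonneg_right hub (Real.sqrt_nonneg _)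
  _ = ((1+t:ℕ):ℝ)^(1+t) * Real.exp (1 - ((1+t:ℕ):ℝ)) *
      (Real.sqrt ((1+t:ℕ):ℝ) * Real.sqrt ((1+t:ℕ):ℝ)) := by ring
  _ = ((1+t:ℕ):ℝ)^(1+t) * Real.exp (1 - ((1+t:ℕ):ℝ)) * ((1+t:ℕ):ℝ) := by rw [hsq]

private lemma RB.even_core (nR L : ℝ) (b d : ℕ) (hb : 1 ≤ b) (hd3 : 3 ≤ d)
    (hnL1 : 1 ≤ nR*L) (hNpos0 : 0 < nR^2*L)
    (hdle : (d:ℝ) ≤ ((b:ℝ)+1+((b:ℝ)+1)) * (nR * L))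
    (hfact1 : 5*(nR*L)*Real.exp (3/2) ≤ (nR^2*L)^2)
    (hfact2 : 5*(nR*L)*Real.exp 1 ≤ (nR^2*L)^2) :
    ((d+b)! : ℝ) * Real.exp d ≤ (b ! : ℝ) * ((d:ℝ))^d * (nR^2*L)^((b+1)+(b+1)) := by
  have hB1 : (1:ℝ) ≤ (b:ℝ) := by exact_mod_cast hb
  have hD1 : (3:ℝ) ≤ (d:ℝ) := by exact_mod_cast hd3
  set N := nR^2*L with hN
  have hNpos : 0 < N := hNpos0
  set B := (b:ℝ) with hB
  set D := (d:ℝ) with hD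
  have hDpos : 0 < D := by linarith
  have hS : ((d+b:ℕ):ℝ) = D + B := by push_cast; ring
  have hSpos : 0 < D + B := by linarith
  have h1 : ((d+b)! : ℝ) ≤ Real.sqrt (D+B) * (D+B)^(d+b) * Real.exp (1-(D+B)) := by
    have := RB.stirling_ub (n := d+b) (by omega)
    rwa [hS] at this
  have h2 : B^b * Real.exp (-B) ≤ (b ! : ℝ) := by
    have h := RB.pow_le_exp_mul_factorial b
    have hee : Real.exp B * Real.exp (-B) = 1 := by
      rw [← Real.exp_add]; norm_num
    calc B^b * Real.exp (-B) ≤ (Real.exp B * (b ! :ℝ)) * Real.exp (-B) := by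
          exact mul_le_mul_of_nonneg_right h (Real.exp_pos _).le
    _ = (b ! : ℝ) * (Real.exp B * Real.exp (-B)) := by ring
    _ = (b ! : ℝ) := by rw [hee, mul_one]
  have h4 : (D+B)^d ≤ D^d * Real.exp B := by
    have hstep : D + B ≤ D * Real.exp (B/D) := by
      have h := Real.add_one_le_exp (B/D)
      have := mul_le_mul_of_nonneg_left h hDpos.le
      calc D + B = D * (B/D + 1) := by field_simp [hDpos.ne']; ring
      _ ≤ D * Real.exp (B/D) := this
    calc (D+B)^d ≤ (D * Real.exp (B/D))^d := by
          exact pow_le_pow_left₀ hSpos.le hstep d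
    _ = D^d * (Real.exp (B/D))^d := mul_pow _ _ _
    _ = D^d * Real.exp B := by
        rw [← Real.exp_nat_mul]
        congr 1
        rw [← hD]; congr 1; field_simp [hDpos.ne']
  have h5 : D + B ≤ 5*B*(nR*L) := by nlinarith
  have h6 : (D+B)^b ≤ (5*(nR*L))^b * B^b := by
    calc (D+B)^b ≤ (5*B*(nR*L))^b := pow_le_pow_left₀ hSpos.le h5 b
    _ = (5*(nR*L))^b * B^b := by rw [← mul_pow]; congr 1; ring
  have h7 : Real.sqrt (D+B) ≤ 5*(nR*L) * Real.exp (B/2) := by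
    have hBe : B ≤ Real.exp B := by nlinarith [Real.add_one_le_exp B]
    have hs1 : D + B ≤ 5*(nR*L) * Real.exp B := by nlinarith [Real.exp_pos B]
    calc Real.sqrt (D+B) ≤ Real.sqrt (5*(nR*L) * Real.exp B) := Real.sqrt_le_sqrt hs1
    _ = Real.sqrt (5*(nR*L)) * Real.sqrt (Real.exp B) := Real.sqrt_mul (by nlinarith) _
    _ = Real.sqrt (5*(nR*L)) * Real.exp (B/2) := by rw [← Real.exp_half]
    _ ≤ 5*(nR*L) * Real.exp (B/2) := by
        exact mul_le_mul_of_nonneg_right (RB.sqrt_le_self (by nlinarith)) (Real.exp_pos _).le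
  have hcore : ((d+b)! : ℝ) * Real.exp d ≤
      D^d * B^b * ((5*(nR*L))^b * (5*(nR*L))) * (Real.exp (B/2 + 1)) := by
    have e1 : ((d+b)! : ℝ) * Real.exp d ≤
        (Real.sqrt (D+B) * (D+B)^(d+b) * Real.exp (1-(D+B))) * Real.exp d :=
      mul_le_mul_of_nonneg_right h1 (Real.exp_pos _).le
    have e2 : (D+B)^(d+b) = (D+B)^d * (D+B)^b := pow_add _ d b
    have e3 : (D+B)^d * (D+B)^b ≤ (D^d * Real.exp B) * ((5*(nR*L))^b * B^b) :=
      mul_le_mul h4 h6 (by positivity) (by positivity)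
    have e4 : Real.sqrt (D+B) * ((D+B)^d * (D+B)^b) ≤
        (5*(nR*L) * Real.exp (B/2)) * ((D^d * Real.exp B) * ((5*(nR*L))^b * B^b)) :=
      mul_le_mul h7 e3 (by positivity) (by positivity)
    have eE : Real.exp (B/2) * Real.exp B * Real.exp (1-(D+B)) * Real.exp D =
        Real.exp (B/2 + 1) := by
      rw [← Real.exp_add, ← Real.exp_add, ← Real.exp_add]; congr 1; ring
    calc ((d+b)! : ℝ) * Real.exp d
        ≤ (Real.sqrt (D+B) * (D+B)^(d+b) * Real.exp (1-(D+B))) * Real.exp d := e1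
    _ = (Real.sqrt (D+B) * ((D+B)^d * (D+B)^b)) * (Real.exp (1-(D+B)) * Real.exp D) := by
        rw [e2]; ring
    _ ≤ ((5*(nR*L) * Real.exp (B/2)) * ((D^d * Real.exp B) * ((5*(nR*L))^b * B^b))) *
        (Real.exp (1-(D+B)) * Real.exp D) := by
        refine mul_le_mul_of_nonneg_right e4 (by positivity)
    _ = D^d * B^b * ((5*(nR*L))^b * (5*(nR*L))) *
        (Real.exp (B/2) * Real.exp B * Real.exp (1-(D+B)) * Real.exp D) := by ring
    _ = D^d * B^b * ((5*(nR*L))^b * (5*(nR*L))) * (Real.exp (B/2 + 1)) := by rw [eE]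
  have hpow : (5*(nR*L))^b * (5*(nR*L)) * (Real.exp (B/2 + 1) * Real.exp B) ≤
      N^((b+1)+(b+1)) := by
    have eE2 : Real.exp (B/2 + 1) * Real.exp B = (Real.exp (3/2))^b * Real.exp 1 := by
      rw [← Real.exp_add]
      have h32 : (B/2 + 1) + B = (b:ℕ) * (3/2) + 1 := by rw [← hB]; ring
      rw [h32, Real.exp_add, Real.exp_nat_mul]
    rw [eE2]
    have hp1 : ((5*(nR*L)) * Real.exp (3/2))^b ≤ (N^2)^b := by
      apply pow_le_pow_left₀ (by positivity)
      calc 5*(nR*L) * Real.exp (3/2) = 5*(nR*L)*Real.exp (3/2) := by ring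
      _ ≤ N^2 := hfact1
    have hp2 : (5*(nR*L)) * Real.exp 1 ≤ N^2 := by
      calc (5*(nR*L)) * Real.exp 1 = 5*(nR*L)*Real.exp 1 := by ring
      _ ≤ N^2 := hfact2
    calc (5*(nR*L))^b * (5*(nR*L)) * ((Real.exp (3/2))^b * Real.exp 1)
        = ((5*(nR*L)) * Real.exp (3/2))^b * ((5*(nR*L)) * Real.exp 1) := by
          rw [mul_pow]; ring
    _ ≤ (N^2)^b * N^2 := by
        exact mul_le_mul hp1 hp2 (by positivity) (by positivity)
    _ = N^((b+1)+(b+1)) := by rw [← pow_succ, ← pow_mul]; ring_nf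
  have hEE : Real.exp (-B) * Real.exp B = 1 := by
    rw [← Real.exp_add]; simp
  calc ((d+b)! : ℝ) * Real.exp d
      ≤ D^d * B^b * ((5*(nR*L))^b * (5*(nR*L))) * (Real.exp (B/2 + 1)) := hcore
  _ = D^d * B^b * (Real.exp (-B) * Real.exp B) * ((5*(nR*L))^b * (5*(nR*L)) * Real.exp (B/2 + 1)) := by
      rw [hEE]; ring
  _ = D^d * B^b * Real.exp (-B) * ((5*(nR*L))^b * (5*(nR*L)) * (Real.exp (B/2 + 1) * Real.exp B)) := by
      ring
  _ ≤ D^d * B^b * Real.exp (-B) * N^((b+1)+(b+1)) := by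
      refine mul_le_mul_of_nonneg_left hpow (by positivity)
  _ = (B^b * Real.exp (-B)) * D^d * N^((b+1)+(b+1)) := by ring
  _ ≤ (b ! : ℝ) * D^d * N^((b+1)+(b+1)) := by
      refine mul_le_mul_of_nonneg_right (mul_le_mul_of_nonneg_right h2 (by positivity)) (by positivity)

private lemma RB.even_zero (nR L : ℝ) (d : ℕ) (hd3 : 3 ≤ d)
    (hnL1 : 1 ≤ nR*L)
    (hdle : (d:ℝ) ≤ 2 * (nR * L))
    (hfact2 : 5*(nR*L)*Real.exp 1 ≤ (nR^2*L)^2) :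
    ((d)! : ℝ) * Real.exp d ≤ ((d:ℝ))^d * (nR^2*L)^2 := by
  have hD1 : (1:ℝ) ≤ (d:ℝ) := by exact_mod_cast (by omega : 1 ≤ d)
  have hub := RB.stirling_ub (n := d) (by omega)
  have hE : Real.exp (1-(d:ℝ)) * Real.exp (d:ℝ) = Real.exp 1 := by
    rw [← Real.exp_add]; congr 1; ring
  have hsd : Real.sqrt (d:ℝ) ≤ (d:ℝ) := RB.sqrt_le_self hD1
  have hkey : Real.sqrt (d:ℝ) * Real.exp 1 ≤ (nR^2*L)^2 := by
    calc Real.sqrt (d:ℝ) * Real.exp 1 ≤ (2*(nR*L)) * Real.exp 1 :=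
          mul_le_mul_of_nonneg_right (le_trans hsd hdle) (Real.exp_pos _).le
    _ ≤ 5*(nR*L)*Real.exp 1 := by nlinarith [Real.exp_pos 1]
    _ ≤ (nR^2*L)^2 := hfact2
  calc ((d)! : ℝ) * Real.exp d
      ≤ (Real.sqrt (d:ℝ) * (d:ℝ)^d * Real.exp (1-(d:ℝ))) * Real.exp (d:ℝ) :=
        mul_le_mul_of_nonneg_right hub (Real.exp_pos _).le
  _ = (d:ℝ)^d * (Real.sqrt (d:ℝ) * (Real.exp (1-(d:ℝ)) * Real.exp (d:ℝ))) := by ring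
  _ = (d:ℝ)^d * (Real.sqrt (d:ℝ) * Real.exp 1) := by rw [hE]
  _ ≤ (d:ℝ)^d * (nR^2*L)^2 := mul_le_mul_of_nonneg_left hkey (by positivity)

private lemma RB.odd_zero (nR L : ℝ) (d : ℕ) (hd3 : 3 ≤ d)
    (hfact4 : Real.exp 1 ≤ nR^2*L) (hNpos0 : 0 < nR^2*L)
    (hsqrtpi : 1 ≤ Real.sqrt Real.pi) :
    Real.Gamma ((d:ℝ) + 1/2) * Real.exp d ≤
      Real.Gamma (1/2 : ℝ) * ((d:ℝ))^d * (nR^2*L)^1 := by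
  have hDpos : (0:ℝ) < (d:ℝ) := by
    have : (3:ℝ) ≤ (d:ℝ) := by exact_mod_cast hd3
    linarith
  have g1 : Real.Gamma ((d:ℝ) + 1/2) ≤ Real.Gamma (d:ℝ) * Real.sqrt (d:ℝ) :=
    RB.gamma_half_ub hDpos
  have g2 : Real.Gamma (d:ℝ) * Real.sqrt (d:ℝ) ≤ ((d:ℝ))^d * Real.exp (1-(d:ℝ)) :=
    RB.gamma_nat_sqrt (by omega)
  have hE : Real.exp (1-(d:ℝ)) * Real.exp (d:ℝ) = Real.exp 1 := by
    rw [← Real.exp_add]; congr 1; ring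
  calc Real.Gamma ((d:ℝ) + 1/2) * Real.exp d
      ≤ ((d:ℝ)^d * Real.exp (1-(d:ℝ))) * Real.exp (d:ℝ) :=
        mul_le_mul (le_trans g1 g2) le_rfl (Real.exp_pos _).le (by positivity)
  _ = (d:ℝ)^d * (Real.exp (1-(d:ℝ)) * Real.exp (d:ℝ)) := by ring
  _ = (d:ℝ)^d * Real.exp 1 := by rw [hE]
  _ ≤ (d:ℝ)^d * (nR^2*L) := mul_le_mul_of_nonneg_left hfact4 (by positivity)
  _ ≤ Real.Gamma (1/2 : ℝ) * ((d:ℝ))^d * (nR^2*L)^1 := by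
      rw [Real.Gamma_one_half_eq, pow_one]
      nlinarith [pow_pos hDpos d, mul_pos (pow_pos hDpos d) hNpos0]

private lemma RB.odd_core (nR L : ℝ) (c d : ℕ) (hc : 1 ≤ c) (hd3 : 3 ≤ d)
    (hnL1 : 1 ≤ nR*L) (hNpos0 : 0 < nR^2*L)
    (hdle : (d:ℝ) ≤ (2*(c:ℝ)+1) * (nR * L))
    (hfact3 : 4*(nR*L)*Real.exp (3/2) ≤ (nR^2*L)^2)
    (hfact4 : Real.exp 1 ≤ nR^2*L) :
    Real.Gamma (((d:ℝ)+(c:ℝ)) + 1/2) * Real.exp d ≤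
      Real.Gamma ((c:ℝ) + 1/2) * ((d:ℝ))^d * (nR^2*L)^(2*c+1) := by
  have hC1 : (1:ℝ) ≤ (c:ℝ) := by exact_mod_cast hc
  have hD1 : (3:ℝ) ≤ (d:ℝ) := by exact_mod_cast hd3
  set N := nR^2*L with hN
  set C := (c:ℝ) with hCdef
  set D := (d:ℝ) with hDdef
  have hDpos : 0 < D := by linarith
  have hSpos : 0 < D + C := by linarith
  have hS : ((d+c:ℕ):ℝ) = D + C := by push_cast; ring
  have hGpos : 0 < Real.Gamma (C + 1/2) := Real.Gamma_pos_of_pos (by linarith)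
  have g1 : Real.Gamma ((D+C) + 1/2) ≤ Real.Gamma (D+C) * Real.sqrt (D+C) :=
    RB.gamma_half_ub hSpos
  have g2 : Real.Gamma (D+C) * Real.sqrt (D+C) ≤ (D+C)^(d+c) * Real.exp (1-(D+C)) := by
    have := RB.gamma_nat_sqrt (s := d+c) (by omega)
    rwa [hS] at this
  have gG : C^c * Real.exp (-(3*C/2)) ≤ Real.Gamma (C + 1/2) := by
    have g3 : (c ! : ℝ) ≤ Real.Gamma (C + 1/2) * Real.sqrt (C+1) := by
      have h := RB.gamma_half_lb (x := C) (by linarith)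
      rw [Real.Gamma_nat_eq_factorial] at h
      calc (c ! : ℝ) ≤ Real.Gamma (C + 1/2) * Real.sqrt (C + 1/2) := h
      _ ≤ Real.Gamma (C + 1/2) * Real.sqrt (C+1) := by
          exact mul_le_mul_of_nonneg_left (Real.sqrt_le_sqrt (by linarith)) hGpos.le
    have g4 : C^c * Real.exp (-C) ≤ (c ! : ℝ) := by
      have h := RB.pow_le_exp_mul_factorial c
      have hee : Real.exp C * Real.exp (-C) = 1 := by rw [← Real.exp_add]; norm_num
      calc C^c * Real.exp (-C) ≤ (Real.exp C * (c ! :ℝ)) * Real.exp (-C) :=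
            mul_le_mul_of_nonneg_right h (Real.exp_pos _).le
      _ = (c ! : ℝ) * (Real.exp C * Real.exp (-C)) := by ring
      _ = (c ! : ℝ) := by rw [hee, mul_one]
    have g6 : Real.sqrt (C+1) ≤ Real.exp (C/2) := by
      have h1 : C + 1 ≤ Real.exp C := Real.add_one_le_exp C
      calc Real.sqrt (C+1) ≤ Real.sqrt (Real.exp C) := Real.sqrt_le_sqrt h1
      _ = Real.exp (C/2) := (Real.exp_half C).symm
    have t1 : C^c * Real.exp (-C) ≤ Real.Gamma (C+1/2) * Real.exp (C/2) :=
      le_trans g4 (le_trans g3 (mul_le_mul_of_nonneg_left g6 hGpos.le))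
    have hee2 : Real.exp (C/2) * Real.exp (-(C/2)) = 1 := by rw [← Real.exp_add]; norm_num
    calc C^c * Real.exp (-(3*C/2)) = (C^c * Real.exp (-C)) * Real.exp (-(C/2)) := by
          rw [mul_assoc, ← Real.exp_add]; congr 2; ring
    _ ≤ (Real.Gamma (C+1/2) * Real.exp (C/2)) * Real.exp (-(C/2)) :=
        mul_le_mul_of_nonneg_right t1 (Real.exp_pos _).le
    _ = Real.Gamma (C+1/2) * (Real.exp (C/2) * Real.exp (-(C/2))) := by ring
    _ = Real.Gamma (C+1/2) := by rw [hee2, mul_one]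
  have h4 : (D+C)^d ≤ D^d * Real.exp C := by
    have hstep : D + C ≤ D * Real.exp (C/D) := by
      have h := Real.add_one_le_exp (C/D)
      have := mul_le_mul_of_nonneg_left h hDpos.le
      calc D + C = D * (C/D + 1) := by field_simp [hDpos.ne']; ring
      _ ≤ D * Real.exp (C/D) := this
    calc (D+C)^d ≤ (D * Real.exp (C/D))^d := pow_le_pow_left₀ hSpos.le hstep d
    _ = D^d * (Real.exp (C/D))^d := mul_pow _ _ _
    _ = D^d * Real.exp C := by
        rw [← Real.exp_nat_mul]; congr 1; rw [← hDdef]; congr 1; field_simp [hDpos.ne']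
  have h6 : (D+C)^c ≤ (4*(nR*L))^c * C^c := by
    have h5 : D + C ≤ 4*C*(nR*L) := by nlinarith
    calc (D+C)^c ≤ (4*C*(nR*L))^c := pow_le_pow_left₀ hSpos.le h5 c
    _ = (4*(nR*L))^c * C^c := by rw [← mul_pow]; congr 1; ring
  have hcore : Real.Gamma ((D+C) + 1/2) * Real.exp d ≤
      D^d * C^c * (4*(nR*L))^c * Real.exp 1 := by
    have e1 : Real.Gamma ((D+C)+1/2) * Real.exp d ≤
        ((D+C)^(d+c) * Real.exp (1-(D+C))) * Real.exp D :=
      mul_le_mul (le_trans g1 g2) le_rfl (Real.exp_pos _).le (by positivity)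
    have e2 : (D+C)^(d+c) = (D+C)^d * (D+C)^c := pow_add _ d c
    have e3 : (D+C)^d * (D+C)^c ≤ (D^d * Real.exp C) * ((4*(nR*L))^c * C^c) :=
      mul_le_mul h4 h6 (by positivity) (by positivity)
    have eE : Real.exp C * (Real.exp (1-(D+C)) * Real.exp D) = Real.exp 1 := by
      rw [← Real.exp_add, ← Real.exp_add]; congr 1; ring
    calc Real.Gamma ((D+C)+1/2) * Real.exp d
        ≤ ((D+C)^(d+c) * Real.exp (1-(D+C))) * Real.exp D := e1
    _ = ((D+C)^d * (D+C)^c) * (Real.exp (1-(D+C)) * Real.exp D) := by rw [e2]; ring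
    _ ≤ ((D^d * Real.exp C) * ((4*(nR*L))^c * C^c)) * (Real.exp (1-(D+C)) * Real.exp D) := by
        refine mul_le_mul_of_nonneg_right e3 (by positivity)
    _ = D^d * C^c * (4*(nR*L))^c * (Real.exp C * (Real.exp (1-(D+C)) * Real.exp D)) := by ring
    _ = D^d * C^c * (4*(nR*L))^c * Real.exp 1 := by rw [eE]
  have hpow : (4*(nR*L))^c * (Real.exp (3*C/2) * Real.exp 1) ≤ N^(2*c+1) := by
    have eE2 : Real.exp (3*C/2) = (Real.exp (3/2))^c := by
      rw [← Real.exp_nat_mul]; congr 1; rw [← hCdef]; ring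
    have hp1 : ((4*(nR*L)) * Real.exp (3/2))^c ≤ (N^2)^c := by
      apply pow_le_pow_left₀ (by positivity)
      calc 4*(nR*L) * Real.exp (3/2) = 4*(nR*L)*Real.exp (3/2) := by ring
      _ ≤ N^2 := hfact3
    calc (4*(nR*L))^c * (Real.exp (3*C/2) * Real.exp 1)
        = ((4*(nR*L)) * Real.exp (3/2))^c * Real.exp 1 := by rw [eE2, mul_pow]; ring
    _ ≤ (N^2)^c * N := mul_le_mul hp1 hfact4 (Real.exp_pos _).le (by positivity)
    _ = N^(2*c+1) := by rw [← pow_mul, ← pow_succ]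
  have hee3 : Real.exp (-(3*C/2)) * Real.exp (3*C/2) = 1 := by rw [← Real.exp_add]; norm_num
  calc Real.Gamma ((D+C) + 1/2) * Real.exp d
      ≤ D^d * C^c * (4*(nR*L))^c * Real.exp 1 := hcore
  _ = (C^c * Real.exp (-(3*C/2))) * D^d * ((4*(nR*L))^c * (Real.exp (3*C/2) * Real.exp 1)) := by
      rw [show (C^c * Real.exp (-(3*C/2))) * D^d * ((4*(nR*L))^c * (Real.exp (3*C/2) * Real.exp 1))
          = C^c * (Real.exp (-(3*C/2)) * Real.exp (3*C/2)) * D^d * ((4*(nR*L))^c * Real.exp 1)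
          from by ring, hee3]
      ring
  _ ≤ (C^c * Real.exp (-(3*C/2))) * D^d * N^(2*c+1) := by
      refine mul_le_mul_of_nonneg_left hpow (by positivity)
  _ ≤ Real.Gamma (C + 1/2) * D^d * N^(2*c+1) := by
      refine mul_le_mul_of_nonneg_right (mul_le_mul_of_nonneg_right gG (by positivity)) (by positivity)

private lemma RB.community_bound (nR L : ℝ) (hn : 3 ≤ nR) (hL : 12/11 ≤ L) (m d : ℕ)
    (hm : 1 ≤ m) (hmd : m ≤ d) (hd3 : 3 ≤ d) (hdle : (d:ℝ) ≤ (m:ℝ) * (nR * L)) :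
    Real.Gamma ((d:ℝ) + (m:ℝ)/2) * Real.exp d ≤
      Real.Gamma ((m:ℝ)/2) * ((d:ℝ))^d * (nR^2*L)^m := by
  have hL1 : (1:ℝ) ≤ L := by linarith
  have hnL1 : (1:ℝ) ≤ nR*L := by nlinarith
  have hNpos0 : (0:ℝ) < nR^2*L := by nlinarith
  have h27 : (27:ℝ) ≤ nR^3 := by nlinarith
  have hn3L : (29:ℝ) ≤ nR^3*L := by nlinarith
  have hfact1 : 5*(nR*L)*Real.exp (3/2) ≤ (nR^2*L)^2 := by
    nlinarith [mul_le_mul_of_nonneg_left RB.exp_three_half_le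
        (by nlinarith : (0:ℝ) ≤ 5*(nR*L)),
      mul_le_mul_of_nonneg_left hn3L (by nlinarith : (0:ℝ) ≤ nR*L)]
  have hfact2 : 5*(nR*L)*Real.exp 1 ≤ (nR^2*L)^2 := by
    nlinarith [mul_le_mul_of_nonneg_left RB.exp_one_le (by nlinarith : (0:ℝ) ≤ 5*(nR*L)),
      mul_le_mul_of_nonneg_left hn3L (by nlinarith : (0:ℝ) ≤ nR*L)]
  have hfact3 : 4*(nR*L)*Real.exp (3/2) ≤ (nR^2*L)^2 := by
    nlinarith [Real.exp_pos (3/2)]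
  have hfact4 : Real.exp 1 ≤ nR^2*L := by nlinarith [RB.exp_one_le]
  have hsqrtpi : 1 ≤ Real.sqrt Real.pi := by
    rw [show (1:ℝ) = Real.sqrt 1 from (Real.sqrt_one).symm]
    exact Real.sqrt_le_sqrt (by nlinarith [Real.pi_gt_three])
  rcases Nat.even_or_odd m with ⟨c, hc⟩ | ⟨c, hc⟩
  · -- even : m = c + c
    subst hc
    have hc1 : 1 ≤ c := by omega
    obtain ⟨b, rfl⟩ : ∃ b, c = b + 1 := ⟨c-1, by omega⟩
    have hg2 : (d:ℝ) + ((((b+1)+(b+1):ℕ)):ℝ)/2 = ((d+b:ℕ):ℝ) + 1 := by push_cast; ring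
    have hg1 : ((((b+1)+(b+1):ℕ)):ℝ)/2 = (b:ℝ) + 1 := by push_cast; ring
    rw [hg2, hg1, Real.Gamma_nat_eq_factorial, Real.Gamma_nat_eq_factorial]
    push_cast at hdle
    rcases Nat.eq_zero_or_pos b with rfl | hb
    · have hdle2 : (d:ℝ) ≤ 2 * (nR * L) := by
        calc (d:ℝ) ≤ ((0:ℕ)+1+((0:ℕ)+1):ℝ) * (nR*L) := by push_cast at hdle ⊢; linarith
        _ = 2 * (nR*L) := by norm_num
      have := RB.even_zero nR L d hd3 hnL1 hdle2 hfact2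
      simpa using this
    · have := RB.even_core nR L b d hb hd3 hnL1 hNpos0 (by push_cast at hdle ⊢; linarith) hfact1 hfact2
      simpa using this
  · -- odd : m = 2c+1
    subst hc
    rcases Nat.eq_zero_or_pos c with rfl | hc1
    · have hg2 : (d:ℝ) + ((2*0+1:ℕ):ℝ)/2 = (d:ℝ) + 1/2 := by norm_num
      have hg1 : ((2*0+1:ℕ):ℝ)/2 = (1/2 : ℝ) := by norm_num
      rw [hg2, hg1]
      have := RB.odd_zero nR L d hd3 hfact4 hNpos0 hsqrtpi
      simpa using this
    · have hg2 : (d:ℝ) + ((2*c+1:ℕ):ℝ)/2 = ((d:ℝ)+(c:ℝ)) + 1/2 := by push_cast; ring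
      have hg1 : ((2*c+1:ℕ):ℝ)/2 = (c:ℝ) + 1/2 := by push_cast; ring
      rw [hg2, hg1]
      have hdle2 : (d:ℝ) ≤ (2*(c:ℝ)+1) * (nR * L) := by push_cast at hdle; linarith
      exact RB.odd_core nR L c d hc1 hd3 hnL1 hNpos0 hdle2 hfact3 hfact4

end RBHelpers

/-- bound on the ratio `B̂(x,z)/B(x,z)` for good networks. -/
theorem ratio_B_bound (n k : ℕ) (hn : 3 ≤ n) (hk : 1 ≤ k)
    (x : Fin n → Fin n → ℕ) (hsym : ∀ i j, x i j = x j i)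
    (hx : ∀ i j, (x i j : ℝ) ≤ Real.log n) (z : Fin n → Fin k)
    (hna : ∀ a, 1 ≤ nCount z a)
    (hda : ∀ a, max (nCount z a) 3 ≤ degT x z a) :
    ∏ a : Fin k,
        (Real.Gamma (1 / 2) ^ (nCount z a) *
          Real.Gamma ((degT x z a : ℝ) + (nCount z a : ℝ) / 2) /
          Real.Gamma ((nCount z a : ℝ) / 2) *
          ∏ i ∈ Finset.univ.filter (fun i => z i = a),
            ((deg x i : ℝ) / (degT x z a : ℝ)) ^ (deg x i) /
              Real.Gamma ((deg x i : ℝ) + 1 / 2)) ≤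
      ((n : ℝ) ^ 2 * Real.log n) ^ n := by
  classical
  have hn3 : (3:ℝ) ≤ (n:ℝ) := by exact_mod_cast hn
  have hL : (12/11 : ℝ) ≤ Real.log n := by
    refine le_trans RB.log_three_ge ?_
    exact Real.log_le_log (by norm_num) hn3
  set L := Real.log n with hLdef
  have hNpos : (0:ℝ) < (n:ℝ)^2 * L := by nlinarith
  -- the per-community bound
  have key : ∀ a : Fin k,
      Real.Gamma (1 / 2) ^ (nCount z a) *
          Real.Gamma ((degT x z a : ℝ) + (nCount z a : ℝ) / 2) /
          Real.Gamma ((nCount z a : ℝ) / 2) *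
          ∏ i ∈ Finset.univ.filter (fun i => z i = a),
            ((deg x i : ℝ) / (degT x z a : ℝ)) ^ (deg x i) /
              Real.Gamma ((deg x i : ℝ) + 1 / 2) ≤ ((n:ℝ)^2 * L) ^ (nCount z a) := by
    intro a
    have hm : 1 ≤ nCount z a := hna a
    have hd : max (nCount z a) 3 ≤ degT x z a := hda a
    have hd3 : 3 ≤ degT x z a := le_trans (le_max_right _ 3) hd
    have hmd : nCount z a ≤ degT x z a := le_trans (le_max_left _ 3) hd
    have hdTpos : (0:ℝ) < (degT x z a : ℝ) := by
      have : (3:ℝ) ≤ (degT x z a : ℝ) := by exact_mod_cast hd3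
      linarith
    have hm1 : (1:ℝ) ≤ (nCount z a : ℝ) := by exact_mod_cast hm
    have hG2 : 0 < Real.Gamma ((degT x z a : ℝ) + (nCount z a : ℝ)/2) :=
      Real.Gamma_pos_of_pos (by linarith)
    have hG3 : 0 < Real.Gamma ((nCount z a : ℝ)/2) :=
      Real.Gamma_pos_of_pos (by linarith)
    have hdeg : ∀ i : Fin n, (deg x i : ℝ) ≤ (n:ℝ) * L := by
      intro i
      have hcast : (deg x i : ℝ) = ∑ j, (x i j : ℝ) := by
        unfold deg; push_cast; rfl
      rw [hcast]
      calc ∑ j, (x i j:ℝ) ≤ ∑ _j : Fin n, L := Finset.sum_le_sum (fun j _ => hx i j)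
      _ = (n:ℝ) * L := by
          rw [Finset.sum_const, Finset.card_univ, Fintype.card_fin, nsmul_eq_mul]
    have hdcast : (degT x z a : ℝ) =
        ∑ i ∈ Finset.univ.filter (fun i => z i = a), (deg x i : ℝ) := by
      unfold degT; push_cast; rfl
    have hdle : (degT x z a : ℝ) ≤ (nCount z a : ℝ) * ((n:ℝ)*L) := by
      rw [hdcast]
      calc ∑ i ∈ Finset.univ.filter (fun i => z i = a), (deg x i:ℝ)
          ≤ ∑ _i ∈ Finset.univ.filter (fun i => z i = a), (n:ℝ)*L :=
            Finset.sum_le_sum (fun i _ => hdeg i)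
      _ = (nCount z a : ℝ) * ((n:ℝ)*L) := by
          rw [Finset.sum_const, nsmul_eq_mul]; rfl
    -- vertex bounds
    have hvertex : ∀ i ∈ Finset.univ.filter (fun i => z i = a),
        Real.sqrt Real.pi *
          (((deg x i:ℝ)/(degT x z a:ℝ))^(deg x i) / Real.Gamma ((deg x i:ℝ)+1/2)) ≤
        Real.exp (deg x i) / (degT x z a:ℝ)^(deg x i) := by
      intro i _
      have hG : 0 < Real.Gamma ((deg x i:ℝ)+1/2) := Real.Gamma_pos_of_pos (by positivity)
      have hdp : (0:ℝ) < (degT x z a:ℝ)^(deg x i) := pow_pos hdTpos _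
      rw [mul_div_assoc', div_le_div_iff₀ hG hdp]
      calc Real.sqrt Real.pi * ((deg x i:ℝ)/(degT x z a:ℝ))^(deg x i) * (degT x z a:ℝ)^(deg x i)
          = Real.sqrt Real.pi * ((deg x i:ℝ)^(deg x i) / (degT x z a:ℝ)^(deg x i) *
              (degT x z a:ℝ)^(deg x i)) := by rw [div_pow]; ring
      _ = Real.sqrt Real.pi * (deg x i:ℝ)^(deg x i) := by
          rw [div_mul_cancel₀ _ hdp.ne']
      _ ≤ Real.exp (deg x i) * Real.Gamma ((deg x i:ℝ)+1/2) := RB.vertex_bound (deg x i)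
    -- split Γ(1/2)^m into the product
    have hcard : (Finset.univ.filter (fun i => z i = a)).card = nCount z a := rfl
    have hsplit : Real.Gamma (1 / 2) ^ (nCount z a) *
          Real.Gamma ((degT x z a : ℝ) + (nCount z a : ℝ) / 2) /
          Real.Gamma ((nCount z a : ℝ) / 2) *
          ∏ i ∈ Finset.univ.filter (fun i => z i = a),
            ((deg x i : ℝ) / (degT x z a : ℝ)) ^ (deg x i) /
              Real.Gamma ((deg x i : ℝ) + 1 / 2)
        = (Real.Gamma ((degT x z a : ℝ) + (nCount z a : ℝ)/2) /
            Real.Gamma ((nCount z a : ℝ)/2)) *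
          ∏ i ∈ Finset.univ.filter (fun i => z i = a),
            (Real.sqrt Real.pi *
              (((deg x i:ℝ)/(degT x z a:ℝ))^(deg x i) / Real.Gamma ((deg x i:ℝ)+1/2))) := by
      rw [Finset.prod_mul_distrib, Finset.prod_const, hcard, Real.Gamma_one_half_eq]
      ring
    have hprod2 : (∏ i ∈ Finset.univ.filter (fun i => z i = a),
          (Real.sqrt Real.pi *
            (((deg x i:ℝ)/(degT x z a:ℝ))^(deg x i) / Real.Gamma ((deg x i:ℝ)+1/2))))
        ≤ ∏ i ∈ Finset.univ.filter (fun i => z i = a),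
            Real.exp (deg x i) / (degT x z a:ℝ)^(deg x i) := by
      refine Finset.prod_le_prod (fun i _ => ?_) hvertex
      have hG : 0 < Real.Gamma ((deg x i:ℝ)+1/2) := Real.Gamma_pos_of_pos (by positivity)
      exact mul_nonneg (Real.sqrt_nonneg _)
        (div_nonneg (pow_nonneg (div_nonneg (by positivity) hdTpos.le) _) hG.le)
    have hprodeq : (∏ i ∈ Finset.univ.filter (fun i => z i = a),
          Real.exp (deg x i) / (degT x z a:ℝ)^(deg x i))
        = Real.exp (degT x z a : ℝ) / (degT x z a:ℝ)^(degT x z a) := by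
      rw [Finset.prod_div_distrib, ← Real.exp_sum, Finset.prod_pow_eq_pow_sum, ← hdcast]
      rfl
    have hcomm := RB.community_bound (n:ℝ) L hn3 hL (nCount z a) (degT x z a)
      hm hmd hd3 hdle
    rw [hsplit]
    have hstep : (Real.Gamma ((degT x z a : ℝ) + (nCount z a : ℝ)/2) /
          Real.Gamma ((nCount z a : ℝ)/2)) *
        (∏ i ∈ Finset.univ.filter (fun i => z i = a),
          (Real.sqrt Real.pi *
            (((deg x i:ℝ)/(degT x z a:ℝ))^(deg x i) / Real.Gamma ((deg x i:ℝ)+1/2))))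
        ≤ (Real.Gamma ((degT x z a : ℝ) + (nCount z a : ℝ)/2) /
            Real.Gamma ((nCount z a : ℝ)/2)) *
          (Real.exp (degT x z a : ℝ) / (degT x z a:ℝ)^(degT x z a)) := by
      refine mul_le_mul_of_nonneg_left ?_ (div_nonneg hG2.le hG3.le)
      rw [← hprodeq]
      exact hprod2
    refine le_trans hstep ?_
    rw [div_mul_div_comm, div_le_iff₀ (by positivity)]
    calc Real.Gamma ((degT x z a : ℝ) + (nCount z a : ℝ)/2) * Real.exp (degT x z a : ℝ)
        ≤ Real.Gamma ((nCount z a : ℝ)/2) * (degT x z a:ℝ)^(degT x z a) *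
          ((n:ℝ)^2*L)^(nCount z a) := hcomm
    _ = ((n:ℝ)^2*L)^(nCount z a) *
        (Real.Gamma ((nCount z a : ℝ)/2) * (degT x z a:ℝ)^(degT x z a)) := by ring
  -- assemble over communities
  have hfac_nonneg : ∀ a ∈ (Finset.univ : Finset (Fin k)),
      0 ≤ Real.Gamma (1 / 2) ^ (nCount z a) *
          Real.Gamma ((degT x z a : ℝ) + (nCount z a : ℝ) / 2) /
          Real.Gamma ((nCount z a : ℝ) / 2) *
          ∏ i ∈ Finset.univ.filter (fun i => z i = a),
            ((deg x i : ℝ) / (degT x z a : ℝ)) ^ (deg x i) /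
              Real.Gamma ((deg x i : ℝ) + 1 / 2) := by
    intro a _
    have hm1 : (1:ℝ) ≤ (nCount z a : ℝ) := by exact_mod_cast hna a
    have h1 : 0 < Real.Gamma (1/2 : ℝ) := Real.Gamma_pos_of_pos (by norm_num)
    have hG2 : 0 < Real.Gamma ((degT x z a : ℝ) + (nCount z a : ℝ)/2) :=
      Real.Gamma_pos_of_pos (by positivity)
    have hG3 : 0 < Real.Gamma ((nCount z a : ℝ)/2) := Real.Gamma_pos_of_pos (by linarith)
    refine mul_nonneg (div_nonneg (mul_nonneg (pow_nonneg h1.le _) hG2.le) hG3.le) ?_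
    refine Finset.prod_nonneg (fun i _ => ?_)
    have hG : 0 < Real.Gamma ((deg x i:ℝ)+1/2) := Real.Gamma_pos_of_pos (by positivity)
    exact div_nonneg (pow_nonneg (div_nonneg (by positivity) (by positivity)) _) hG.le
  have hsum : ∑ a : Fin k, nCount z a = n := by
    have h := Finset.card_eq_sum_card_fiberwise
      (f := z) (s := (Finset.univ : Finset (Fin n))) (t := (Finset.univ : Finset (Fin k)))
      (fun x _ => Finset.mem_univ (z x))
    simpa [nCount, Finset.card_univ] using h.symm
  calc (∏ a : Fin k,
        (Real.Gamma (1 / 2) ^ (nCount z a) *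
          Real.Gamma ((degT x z a : ℝ) + (nCount z a : ℝ) / 2) /
          Real.Gamma ((nCount z a : ℝ) / 2) *
          ∏ i ∈ Finset.univ.filter (fun i => z i = a),
            ((deg x i : ℝ) / (degT x z a : ℝ)) ^ (deg x i) /
              Real.Gamma ((deg x i : ℝ) + 1 / 2)))
      ≤ ∏ a : Fin k, ((n:ℝ)^2*L)^(nCount z a) :=
        Finset.prod_le_prod hfac_nonneg (fun a _ => key a)
  _ = ((n:ℝ)^2*L) ^ (∑ a : Fin k, nCount z a) :=
      Finset.prod_pow_eq_pow_sum Finset.univ _ _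
  _ = ((n : ℝ) ^ 2 * Real.log n) ^ n := by rw [hsum]
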